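/- Let G be a topological group and A a compact G-group with a presentation A = lim_r A_r as the inverse limit of an inverse system {A_r, φ_{rt}} over a directed poset R of compact Hausdorff G-groups with continuous G-equivariant transition homomorphisms, with projections φ_r : A → A_r. Suppose given continuous cocycles a_r ∈ Z¹_cts(G,A_r)_po for each r ∈ R such that φ_{rt} ∘ a_r is cohomologous to a_t in Z¹_cts(G,A_t)_po whenever r ≥ t. Then there exists a continuous cocycle a ∈ Z¹_cts(G,A)_po such that φ_r ∘ a is cohomologous to a_r for every r ∈ R; that is, the map Θ : H¹_cts(G,A)_po → lim_r H¹_cts(G,A_r)_po, [a] ↦ ([φ_r ∘ a])_r, is surjective. -/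

import Mathlib

section Setup

variable {G : Type} [Group G] [TopologicalSpace G]
variable {R : Type} [PartialOrder R]
variable {Ar : R → Type} [∀ r, Group (Ar r)] [∀ r, TopologicalSpace (Ar r)]

/-- The inverse limit `A = {(x_r) ∈ ∏ A_r | φ_{rt}(x_r) = x_t}` of the system, with
the subspace topology of the product topology (its group operations and `G`-action
are coordinatewise). -/
abbrev InvLim (φ : ∀ ⦃r t : R⦄, t ≤ r → Ar r → Ar t) : Type :=
  {x : ∀ r, Ar r // ∀ (r t : R) (h : t ≤ r), φ h (x r) = x t}

/-- `Z¹_cts(G, lim A_r)_po`: continuous 1-cocycles of `G` in the inverse limit (the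
cocycle identity stated coordinatewise), with the point-open topology. -/
abbrev Z1Lim (acr : ∀ r, G → Ar r → Ar r) (φ : ∀ ⦃r t : R⦄, t ≤ r → Ar r → Ar t) :
    Type :=
  {a : G → InvLim φ // Continuous a ∧
    ∀ (s t : G) (r : R), (a (s * t)).val r = (a s).val r * acr r s ((a t).val r)}

/-- `Z¹_cts(G, A_r)_po` for an individual term of the system. -/
abbrev Z1r (acr : ∀ r, G → Ar r → Ar r) (r : R) : Type :=
  {b : G → Ar r // Continuous b ∧ ∀ s t : G, b (s * t) = b s * acr r s (b t)}

end Setup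

/-- With `A = lim_r A_r` a compact `G`-group presented as an inverse
limit of compact Hausdorff `G`-groups, given continuous cocycles `a_r ∈
Z¹_cts(G,A_r)_po` such that `φ_{rt} ∘ a_r` is cohomologous to `a_t` whenever
`r ≥ t`, there exists a continuous cocycle `a ∈ Z¹_cts(G,A)_po` with `φ_r ∘ a`
cohomologous to `a_r` for every `r`; that is, the map
`Θ : H¹_cts(G,A)_po → lim_r H¹_cts(G,A_r)_po` is surjective. -/
theorem stmt_12
    {G : Type} [Group G] [TopologicalSpace G] [IsTopologicalGroup G]
    {R : Type} [PartialOrder R] [IsDirected R (· ≤ ·)]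
    (Ar : R → Type) [∀ r, Group (Ar r)] [∀ r, TopologicalSpace (Ar r)]
    [∀ r, IsTopologicalGroup (Ar r)] [∀ r, T2Space (Ar r)] [∀ r, CompactSpace (Ar r)]
    (acr : ∀ r, G → Ar r → Ar r)
    (hacr : ∀ r, Continuous fun p : G × Ar r => acr r p.1 p.2)
    (honer : ∀ r (x : Ar r), acr r 1 x = x)
    (hcompr : ∀ r (s t : G) (x : Ar r), acr r (s * t) x = acr r s (acr r t x))
    (hdistr : ∀ r (s : G) (x y : Ar r), acr r s (x * y) = acr r s x * acr r s y)
    (φ : ∀ ⦃r t : R⦄, t ≤ r → Ar r → Ar t)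
    (hφcont : ∀ (r t : R) (h : t ≤ r), Continuous (φ h))
    (hφid : ∀ r : R, φ (le_refl r) = id)
    (hφcomp : ∀ (r t u : R) (h1 : u ≤ t) (h2 : t ≤ r) (x : Ar r),
      φ h1 (φ h2 x) = φ (h1.trans h2) x)
    (hφmul : ∀ (r t : R) (h : t ≤ r) (x y : Ar r), φ h (x * y) = φ h x * φ h y)
    (hφequiv : ∀ (r t : R) (h : t ≤ r) (s : G) (x : Ar r),
      φ h (acr r s x) = acr t s (φ h x))
    -- `A` is a compact `G`-group
    (hAcomp : CompactSpace (InvLim φ))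
    -- a family of continuous cocycles, compatible up to coboundary
    (ar : ∀ r : R, Z1r acr r)
    (hcoh : ∀ (r t : R) (h : t ≤ r), ∃ x : Ar t, ∀ s : G,
      (ar t).val s = x⁻¹ * φ h ((ar r).val s) * acr t s x) :
    -- there is a continuous cocycle in the limit mapping to the class of each `a_r`
    ∃ a : Z1Lim acr φ, ∀ r : R, ∃ x : Ar r, ∀ s : G,
      (ar r).val s = x⁻¹ * (a.val s).val r * acr r s x := by
  classical
  -- auxiliary facts about the actions
  have acr1 : ∀ r (s : G), acr r s 1 = 1 := by
    intro r s
    have h := hdistr r s 1 1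
    rw [mul_one] at h
    exact left_eq_mul.mp h
  have acrinv : ∀ r (s : G) (y : Ar r), acr r s y⁻¹ = (acr r s y)⁻¹ := by
    intro r s y
    have h := hdistr r s y⁻¹ y
    rw [inv_mul_cancel, acr1] at h
    exact eq_inv_of_mul_eq_one_left h.symm
  -- the twisted cocycle candidates
  set b : (∀ r, Ar r) → ∀ r : R, G → Ar r :=
    fun x r s => x r * (ar r).val s * (acr r s (x r))⁻¹ with hbdef
  -- the closed conditions
  let ι : Type := {p : R × R // p.2 ≤ p.1}
  let C : ι → Set (∀ r, Ar r) :=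
    fun i => {x | ∀ s : G, φ i.prop (b x i.val.1 s) = b x i.val.2 s}
  have hbcontx : ∀ (r : R) (s : G),
      Continuous fun x : ∀ r, Ar r => b x r s := by
    intro r s
    exact ((continuous_apply r).mul continuous_const).mul
      (((hacr r).comp (continuous_const.prodMk (continuous_apply r))).inv)
  have hCclosed : ∀ i, IsClosed (C i) := by
    intro i
    have : C i = ⋂ s : G, {x | φ i.prop (b x i.val.1 s) = b x i.val.2 s} := by
      ext x; simp [C, Set.mem_iInter]
    rw [this]
    exact isClosed_iInter fun s =>
      isClosed_eq ((hφcont _ _ i.prop).comp (hbcontx i.val.1 s)) (hbcontx i.val.2 s)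
  -- finite intersection property
  have hfin : ∀ u : Finset ι, (Set.univ ∩ ⋂ i ∈ u, C i).Nonempty := by
    intro u
    rw [Set.univ_inter]
    rcases u.eq_empty_or_nonempty with hu | ⟨i0, hi0⟩
    · subst hu
      refine ⟨fun r => 1, ?_⟩
      simp
    · haveI : Nonempty R := ⟨i0.val.1⟩
      obtain ⟨r, hr⟩ := Finset.exists_le (u.image fun i => i.val.1)
      have hur : ∀ i ∈ u, i.val.1 ≤ r := fun i hi =>
        hr _ (Finset.mem_image_of_mem _ hi)
      refine ⟨fun t => if h : t ≤ r then Classical.choose (hcoh r t h) else 1, ?_⟩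
      have hkey : ∀ (t : R) (h : t ≤ r) (s : G),
          b (fun t => if h : t ≤ r then Classical.choose (hcoh r t h) else 1) t s
            = φ h ((ar r).val s) := by
        intro t h s
        have hspec := Classical.choose_spec (hcoh r t h) s
        simp only [hbdef, dif_pos h]
        rw [hspec]
        group
      refine Set.mem_iInter₂.mpr fun i hi => ?_
      intro s
      have h1 : i.val.1 ≤ r := hur i hi
      have h2 : i.val.2 ≤ r := i.prop.trans h1
      rw [hkey i.val.1 h1 s, hkey i.val.2 h2 s, hφcomp]
  obtain ⟨x, -, hx⟩ :=
    IsCompact.inter_iInter_nonempty (isCompact_univ (X := ∀ r, Ar r)) C hCclosed hfin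
  have hxC : ∀ i : ι, x ∈ C i := Set.mem_iInter.mp hx
  -- assemble the limit cocycle
  have hcompat : ∀ (s : G) (r t : R) (h : t ≤ r), φ h (b x r s) = b x t s := by
    intro s r t h
    exact hxC ⟨(r, t), h⟩ s
  refine ⟨⟨fun s => ⟨fun r => b x r s, fun r t h => hcompat s r t h⟩, ?_, ?_⟩, ?_⟩
  · refine Continuous.subtype_mk (continuous_pi fun r => ?_) _
    exact (continuous_const.mul (ar r).prop.1).mul
      (((hacr r).comp (continuous_id.prodMk continuous_const)).inv)
  · intro s t r
    simp only [hbdef]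
    rw [(ar r).prop.2 s t, hcompr, hdistr, hdistr, acrinv]
    group
  · intro r
    refine ⟨x r, fun s => ?_⟩
    simp only [hbdef]
    group
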